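/- A reduced word over interval letters is commuting (all its letters pairwise commute) if and only if it left-absorbs itself; equivalently, the idempotents of the monoid Γ are exactly the (classes of) commuting words. -/

import Mathlib

structure Letter (N : ℕ) where
  lo : ℕ
  hi : ℕ
  lo_le_hi : lo ≤ hi
  hi_le : hi ≤ N

namespace PS

/-- `t` is a (non-strict) subletter of `s`. -/
def Sub {N : ℕ} (t s : Letter N) : Prop := s.lo ≤ t.lo ∧ t.hi ≤ s.hi

/-- `t` is a proper subletter of `s`. -/
def PSub {N : ℕ} (t s : Letter N) : Prop := Sub t s ∧ t ≠ s

/-- Two letters commute iff they have distance at least 2. -/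
def Comm {N : ℕ} (s t : Letter N) : Prop := s.hi + 2 ≤ t.lo ∨ t.hi + 2 ≤ s.lo

abbrev Word (N : ℕ) := List (Letter N)

/-- Commutation step: swap two adjacent commuting letters. -/
def SwapStep {N : ℕ} (u v : Word N) : Prop :=
  ∃ (x y : Word N) (s t : Letter N),
    Comm s t ∧ u = x ++ s :: t :: y ∧ v = x ++ t :: s :: y

/-- Cancellation step: replace an occurrence `s·t` or `t·s` by `s`, when `t ⊆ s`. -/
def CancelStep {N : ℕ} (u v : Word N) : Prop :=
  ∃ (x y : Word N) (s t : Letter N),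
    Sub t s ∧ (u = x ++ s :: t :: y ∨ u = x ++ t :: s :: y) ∧ v = x ++ s :: y

/-- Splitting step: replace an occurrence `s·s` by a (possibly empty) product of
proper subletters of `s`. -/
def SplitStep {N : ℕ} (u v : Word N) : Prop :=
  ∃ (x y : Word N) (s : Letter N) (l : Word N),
    (∀ t ∈ l, PSub t s) ∧ u = x ++ s :: s :: y ∧ v = x ++ l ++ y

/-- Commutation-equivalence of words. -/
def WEquiv {N : ℕ} : Word N → Word N → Prop := Relation.ReflTransGen SwapStep

/-- Reduction: finitely many commutation and cancellation steps. -/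
def Red {N : ℕ} : Word N → Word N → Prop :=
  Relation.ReflTransGen (fun u v => SwapStep u v ∨ CancelStep u v)

/-- Strong reduction: also allowing splitting steps. -/
def SRed {N : ℕ} : Word N → Word N → Prop :=
  Relation.ReflTransGen (fun u v => SwapStep u v ∨ CancelStep u v ∨ SplitStep u v)

/-- The congruence defining the monoid Γ. -/
def GammaRel {N : ℕ} : Word N → Word N → Prop :=
  Relation.EqvGen (fun u v => SwapStep u v ∨ CancelStep u v)

/-- A word is reduced if there is no pair of occurrences `i ≠ j` with `sᵢ ⊆ sⱼ`
such that `sᵢ` commutes with every letter strictly between them. -/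
def Reduced {N : ℕ} (w : Word N) : Prop :=
  ¬ ∃ (x y z : Word N) (a b : Letter N),
      w = x ++ a :: (y ++ b :: z) ∧
      ((Sub a b ∧ ∀ r ∈ y, Comm a r) ∨ (Sub b a ∧ ∀ r ∈ y, Comm b r))

/-- The letter `s` is left-absorbed by the word `v`. -/
def LAbsLetter {N : ℕ} (s : Letter N) (v : Word N) : Prop :=
  ∃ (x : Word N) (t : Letter N) (y : Word N),
    v = x ++ t :: y ∧ Sub s t ∧ ∀ r ∈ x, Comm s r

/-- The letter `s` is properly left-absorbed by the word `v`. -/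
def PLAbsLetter {N : ℕ} (s : Letter N) (v : Word N) : Prop :=
  ∃ (x : Word N) (t : Letter N) (y : Word N),
    v = x ++ t :: y ∧ PSub s t ∧ ∀ r ∈ x, Comm s r

/-- The letter `s` is right-absorbed by the word `w`. -/
def RAbsLetter {N : ℕ} (s : Letter N) (w : Word N) : Prop :=
  ∃ (x : Word N) (t : Letter N) (y : Word N),
    w = x ++ t :: y ∧ Sub s t ∧ ∀ r ∈ y, Comm s r

/-- The letter `s` is properly right-absorbed by the word `w`. -/
def PRAbsLetter {N : ℕ} (s : Letter N) (w : Word N) : Prop :=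
  ∃ (x : Word N) (t : Letter N) (y : Word N),
    w = x ++ t :: y ∧ PSub s t ∧ ∀ r ∈ y, Comm s r

/-- The word `u` is left-absorbed by `v`. -/
def LAbsWord {N : ℕ} (u v : Word N) : Prop := ∀ s ∈ u, LAbsLetter s v

/-- `v` bites `u` from the right: `v` left-absorbs some letter of the final segment of `u`. -/
def BitesRight {N : ℕ} (v u : Word N) : Prop :=
  ∃ (x : Word N) (s : Letter N) (y : Word N),
    u = x ++ s :: y ∧ (∀ r ∈ y, Comm s r) ∧ LAbsLetter s v

end PS

namespace CSAux

open PS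

variable {N : ℕ}

/-! ### Basic letter lemmas -/

lemma comm_symm {s t : Letter N} (h : Comm s t) : Comm t s := h.symm

lemma not_comm_self (s : Letter N) : ¬ Comm s s := by
  intro h
  have := s.lo_le_hi
  rcases h with h | h <;> omega

lemma sub_refl (s : Letter N) : Sub s s := ⟨le_refl _, le_refl _⟩

lemma sub_trans {a b c : Letter N} (h1 : Sub a b) (h2 : Sub b c) : Sub a c :=
  ⟨le_trans h2.1 h1.1, le_trans h1.2 h2.2⟩

lemma comm_of_sub {s t r : Letter N} (h : Sub s t) (hc : Comm t r) : Comm s r := by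
  obtain ⟨h1, h2⟩ := h
  rcases hc with hc | hc
  · exact Or.inl (by omega)
  · exact Or.inr (by omega)

lemma comm_of_subs {a b s t : Letter N} (ha : Sub a s) (hb : Sub b t) (h : Comm s t) :
    Comm a b :=
  comm_of_sub ha (comm_symm (comm_of_sub hb (comm_symm h)))

lemma not_comm_of_sub {x z : Letter N} (h : Sub x z) : ¬ Comm x z := by
  intro hc
  obtain ⟨h1, h2⟩ := h
  have := x.lo_le_hi
  have := z.lo_le_hi
  rcases hc with hc | hc <;> omega

lemma notcomm_mono {x z d : Letter N} (h : Sub x z) (hn : ¬ Comm x d) : ¬ Comm z d :=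
  fun hc => hn (comm_of_sub h hc)

/-! ### Reduced helpers -/

lemma reduced_no₁ {u A B C : Word N} {s t : Letter N} (hu : Reduced u)
    (h : u = A ++ s :: (B ++ t :: C)) (hst : Sub s t) : ∃ r ∈ B, ¬ Comm s r := by
  by_contra hno
  push_neg at hno
  exact hu ⟨A, B, C, s, t, h, Or.inl ⟨hst, fun r hr => hno r hr⟩⟩

lemma reduced_no₂ {u A B C : Word N} {s t : Letter N} (hu : Reduced u)
    (h : u = A ++ s :: (B ++ t :: C)) (hts : Sub t s) : ∃ r ∈ B, ¬ Comm t r := by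
  by_contra hno
  push_neg at hno
  exact hu ⟨A, B, C, s, t, h, Or.inr ⟨hts, fun r hr => hno r hr⟩⟩

lemma reduced_dropLast {w : Word N} {s : Letter N} (h : Reduced (w ++ [s])) : Reduced w := by
  intro ⟨x, y, z, a, b, hw, hcond⟩
  exact h ⟨x, y, z ++ [s], a, b, by rw [hw]; simp, hcond⟩

/-! ### List decomposition lemmas -/

lemma concat_eq_append_cases {w x y : Word N} {s t : Letter N}
    (h : w ++ [s] = x ++ t :: y) :
    (x = w ∧ t = s ∧ y = []) ∨ ∃ y', y = y' ++ [s] ∧ w = x ++ t :: y' := by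
  rcases List.eq_nil_or_concat y with rfl | ⟨y', s', rfl⟩
  · obtain ⟨h1, h2⟩ := List.append_inj' h rfl
    exact Or.inl ⟨h1.symm, (List.cons.injEq _ _ _ _ ▸ h2).1.symm, rfl⟩
  · rw [List.concat_eq_append] at h
    have h' : w ++ [s] = (x ++ t :: y') ++ [s'] := by rw [h]; simp
    obtain ⟨h1, h2⟩ := List.append_inj' h' rfl
    have hs : s = s' := by simpa using h2
    exact Or.inr ⟨y', by rw [List.concat_eq_append, hs], h1⟩

lemma two_mem_split {u : Word N} {a c : Letter N} (ha : a ∈ u) (hc : c ∈ u) (hne : a ≠ c) :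
    ∃ A B C, u = A ++ a :: (B ++ c :: C) ∨ u = A ++ c :: (B ++ a :: C) := by
  obtain ⟨X, Y, rfl⟩ := List.append_of_mem ha
  rcases List.mem_append.mp hc with hcX | hcY
  · obtain ⟨A, B, rfl⟩ := List.append_of_mem hcX
    exact ⟨A, B, Y, Or.inr (by simp)⟩
  · have hcY' : c ∈ Y := by
      rcases List.mem_cons.mp hcY with h | h
      · exact absurd h.symm hne
      · exact h
    obtain ⟨B, C, rfl⟩ := List.append_of_mem hcY'
    exact ⟨X, B, C, Or.inl rfl⟩

lemma not_pairwise_split {u : Word N} (h : ¬ List.Pairwise (Comm (N := N)) u) :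
    ∃ A B C x y, u = A ++ x :: (B ++ y :: C) ∧ ¬ Comm x y := by
  induction u with
  | nil => exact absurd List.Pairwise.nil h
  | cons s v ih =>
    rw [List.pairwise_cons] at h
    by_cases hall : ∀ b ∈ v, Comm s b
    · have hp : ¬ List.Pairwise (Comm (N := N)) v := fun hp => h ⟨hall, hp⟩
      obtain ⟨A, B, C, x, y, rfl, hny⟩ := ih hp
      exact ⟨s :: A, B, C, x, y, rfl, hny⟩
    · push_neg at hall
      obtain ⟨y, hy, hny⟩ := hall
      obtain ⟨B, C, rfl⟩ := List.append_of_mem hy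
      exact ⟨[], B, C, s, y, rfl, hny⟩

/-! ### Part 1 -/

lemma pairwise_labs {u : Word N} (h : List.Pairwise (Comm (N := N)) u) : LAbsWord u u := by
  intro s hs
  obtain ⟨x, y, rfl⟩ := List.append_of_mem hs
  refine ⟨x, s, y, rfl, sub_refl s, fun r hr => ?_⟩
  have := (List.pairwise_append.mp h).2.2 r hr s (List.mem_cons_self)
  exact comm_symm this

lemma labs_pairwise : ∀ u : Word N, Reduced u → LAbsWord u u → List.Pairwise (Comm (N := N)) u := by
  intro u
  induction u using List.reverseRecOn with
  | nil => intro _ _; exact List.Pairwise.nil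
  | append_singleton w s ih =>
    intro hu habs
    have hwred : Reduced w := reduced_dropLast hu
    have hwabs : LAbsWord w w := by
      intro r hr
      obtain ⟨x, t, y, heq, hsub, hcomm⟩ := habs r (by simp [hr])
      rcases concat_eq_append_cases heq with ⟨rfl, rfl, rfl⟩ | ⟨y', rfl, hw⟩
      · exact absurd (hcomm r hr) (not_comm_self r)
      · exact ⟨x, t, y', hw, hsub, hcomm⟩
    have hwpw : List.Pairwise (Comm (N := N)) w := ih hwred hwabs
    obtain ⟨x, t, y, heq, hsub, hcomm⟩ := habs s (by simp)
    rcases concat_eq_append_cases heq with ⟨rfl, rfl, rfl⟩ | ⟨y', rfl, hw⟩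
    · rw [List.pairwise_append]
      exact ⟨hwpw, List.pairwise_singleton _ _,
        fun r hr t ht => by rw [List.mem_singleton] at ht; subst ht; exact comm_symm (hcomm r hr)⟩
    · exfalso
      apply hu
      refine ⟨x, y', [], t, s, by rw [hw]; simp, Or.inr ⟨hsub, fun r hr => ?_⟩⟩
      have hcomm_tr : Comm t r := by
        rw [hw, List.pairwise_append] at hwpw
        exact (List.pairwise_cons.mp hwpw.2.1).1 r hr
      exact comm_of_sub hsub hcomm_tr

/-! ### Part 2, forward direction -/

lemma swapstep_cons {c : Letter N} {u v : Word N} (h : SwapStep u v) :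
    SwapStep (c :: u) (c :: v) := by
  obtain ⟨x, y, s, t, hc, h1, h2⟩ := h
  exact ⟨c :: x, y, s, t, hc, by rw [h1]; rfl, by rw [h2]; rfl⟩

lemma cancelstep_cons {c : Letter N} {u v : Word N} (h : CancelStep u v) :
    CancelStep (c :: u) (c :: v) := by
  obtain ⟨x, y, s, t, hs, h1, h2⟩ := h
  refine ⟨c :: x, y, s, t, hs, ?_, by rw [h2]; rfl⟩
  rcases h1 with h1 | h1
  · exact Or.inl (by rw [h1]; rfl)
  · exact Or.inr (by rw [h1]; rfl)

lemma red_cons {c : Letter N} {u v : Word N} (h : Red u v) : Red (c :: u) (c :: v) := by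
  exact Relation.ReflTransGen.lift (c :: ·)
    (fun a b hab => hab.elim (fun h => Or.inl (swapstep_cons h))
      (fun h => Or.inr (cancelstep_cons h))) _ _ h

lemma move_left : ∀ (v x y : Word N) (s : Letter N), (∀ r ∈ v, Comm r s) →
    Relation.ReflTransGen (SwapStep (N := N)) (x ++ (v ++ s :: y)) (x ++ s :: (v ++ y)) := by
  intro v
  induction v with
  | nil => intro x y s _; simp; exact Relation.ReflTransGen.refl
  | cons r v' ih =>
    intro x y s hcomm
    have step1 : Relation.ReflTransGen (SwapStep (N := N))
        (x ++ (r :: v' ++ s :: y)) ((x ++ [r]) ++ s :: (v' ++ y)) := by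
      have := ih (x ++ [r]) y s (fun q hq => hcomm q (by simp [hq]))
      simpa using this
    have step2 : SwapStep (N := N) (x ++ r :: s :: (v' ++ y)) (x ++ s :: r :: (v' ++ y)) :=
      ⟨x, v' ++ y, r, s, hcomm r (by simp), rfl, rfl⟩
    have e : (x ++ [r]) ++ s :: (v' ++ y) = x ++ r :: s :: (v' ++ y) := by simp
    rw [e] at step1
    have e2 : x ++ s :: (r :: v' ++ y) = x ++ s :: r :: (v' ++ y) := by simp
    rw [e2]
    exact step1.trans (Relation.ReflTransGen.single step2)

lemma comm_red_sq : ∀ u : Word N, List.Pairwise (Comm (N := N)) u → Red (u ++ u) u := by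
  intro u
  induction u with
  | nil => intro _; exact Relation.ReflTransGen.refl
  | cons s v ih =>
    intro h
    obtain ⟨hhead, hv⟩ := List.pairwise_cons.mp h
    have e1 : Relation.ReflTransGen (SwapStep (N := N))
        ((s :: v) ++ (s :: v)) (s :: s :: (v ++ v)) := by
      have := move_left v [s] v s (fun r hr => comm_symm (hhead r hr))
      simpa using this
    have e1' : Red ((s :: v) ++ (s :: v)) (s :: s :: (v ++ v)) :=
      Relation.ReflTransGen.mono (fun a b hab => Or.inl hab) _ _ e1
    have e2 : CancelStep (N := N) (s :: s :: (v ++ v)) (s :: (v ++ v)) :=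
      ⟨[], v ++ v, s, s, sub_refl s, Or.inl rfl, rfl⟩
    have e3 : Red (s :: (v ++ v)) (s :: v) := red_cons (ih hv)
    exact (e1'.trans (Relation.ReflTransGen.single (Or.inr e2))).trans e3

lemma red_gammarel {u v : Word N} (h : Red u v) : GammaRel u v := by
  induction h with
  | refl => exact Relation.EqvGen.refl _
  | tail _ h ih => exact Relation.EqvGen.trans _ _ _ ih (Relation.EqvGen.rel _ _ h)

/-! ### The collapse (destutter) function -/

def cstep (c : Bool) (r : List Bool) : List Bool := if r.head? = some c then r else c :: r

def collapse (l : List Bool) : List Bool := List.foldr cstep [] l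

lemma cstep_head (c : Bool) (r : List Bool) : (cstep c r).head? = some c := by
  unfold cstep
  split
  · next h => exact h
  · rfl

lemma cstep_of_head {c : Bool} {r : List Bool} (h : r.head? = some c) : cstep c r = r := by
  unfold cstep; rw [if_pos h]

lemma cstep_of_head_ne {c : Bool} {r : List Bool} (h : r.head? ≠ some c) :
    cstep c r = c :: r := by
  unfold cstep; rw [if_neg h]

lemma cstep_cases (c : Bool) (r : List Bool) : cstep c r = r ∨ cstep c r = c :: r := by
  unfold cstep; split
  · exact Or.inl rfl
  · exact Or.inr rfl

lemma collapse_cons (c : Bool) (l : List Bool) :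
    collapse (c :: l) = cstep c (collapse l) := rfl

lemma collapse_dup (c : Bool) : ∀ (x y : List Bool),
    collapse (x ++ c :: c :: y) = collapse (x ++ c :: y) := by
  intro x
  induction x with
  | nil =>
    intro y
    show cstep c (cstep c (collapse y)) = cstep c (collapse y)
    exact cstep_of_head (cstep_head c (collapse y))
  | cons d x ih =>
    intro y
    show cstep d (collapse (x ++ c :: c :: y)) = cstep d (collapse (x ++ c :: y))
    rw [ih]

lemma mem_collapse {x : Bool} : ∀ {l : List Bool}, x ∈ l → x ∈ collapse l := by
  intro l
  induction l with
  | nil => intro h; exact absurd h (by simp)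
  | cons c l ih =>
    intro h
    rw [collapse_cons]
    rcases List.mem_cons.mp h with rfl | h
    · have hh := cstep_head x (collapse l)
      rcases he : cstep x (collapse l) with _ | ⟨d, t⟩
      · rw [he] at hh; simp at hh
      · rw [he] at hh
        simp only [List.head?_cons, Option.some.injEq] at hh
        rw [hh]
        exact List.mem_cons_self
    · have hx := ih h
      rcases cstep_cases c (collapse l) with he | he <;> rw [he]
      · exact hx
      · exact List.mem_cons_of_mem _ hx

lemma collapse_append (x y : List Bool) :
    collapse (x ++ y) = List.foldr cstep (collapse y) x := by
  unfold collapse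
  rw [List.foldr_append]

lemma foldr_cstep_head : ∀ (c : Bool) (x : List Bool) (r : List Bool),
    (List.foldr cstep r (c :: x)).head? = some c := by
  intro c x r
  show (cstep c _).head? = some c
  exact cstep_head _ _

lemma cstep_length (c : Bool) (r : List Bool) :
    (cstep c r).length = r.length ∨ (cstep c r).length = r.length + 1 := by
  unfold cstep
  split
  · exact Or.inl rfl
  · exact Or.inr rfl

lemma foldr_cstep_length : ∀ (x : List Bool) (r : List Bool),
    (List.foldr cstep [] x).length + r.length ≤ (List.foldr cstep r x).length + 1 := by
  intro x
  induction x with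
  | nil => intro r; simp
  | cons c x ih =>
    intro r
    rcases x with _ | ⟨d, x'⟩
    · show (cstep c []).length + r.length ≤ (cstep c r).length + 1
      have h1 : (cstep c []).length = 1 := by unfold cstep; simp
      rcases cstep_length c r with h | h <;> omega
    · have hl : (List.foldr cstep r (d :: x')).head? = some d := foldr_cstep_head _ _ _
      have hl2 : (List.foldr cstep [] (d :: x')).head? = some d := foldr_cstep_head _ _ _
      have ihr := ih r
      show (cstep c (List.foldr cstep [] (d :: x'))).length + r.length ≤
        (cstep c (List.foldr cstep r (d :: x'))).length + 1
      by_cases hdc : d = c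
      · subst hdc
        rw [cstep_of_head hl2, cstep_of_head hl]
        exact ihr
      · rw [cstep_of_head_ne (by rw [hl2]; simp [hdc]),
          cstep_of_head_ne (by rw [hl]; simp [hdc])]
        simp only [List.length_cons]
        omega

lemma length_ge_two {l : List Bool} {x y : Bool} (hx : x ∈ l) (hy : y ∈ l) (hxy : x ≠ y) :
    2 ≤ l.length := by
  rcases l with _ | ⟨c, l⟩
  · simp at hx
  · rcases l with _ | ⟨d, t⟩
    · simp at hx hy
      exact absurd (hx.trans hy.symm) hxy
    · simp only [List.length_cons]; omega

/-! ### The projection invariant -/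

instance (t s : Letter N) : Decidable (Sub t s) :=
  inferInstanceAs (Decidable (s.lo ≤ t.lo ∧ t.hi ≤ s.hi))

def cls (a b s : Letter N) : Option Bool :=
  if Sub a s then some false else if Sub b s then some true else none

lemma cls_a {a b : Letter N} (hba : ¬ Sub b a) : cls a b a = some false := by
  unfold cls
  rw [if_pos (sub_refl a)]

lemma cls_b {a b : Letter N} (hab : ¬ Sub a b) : cls a b b = some true := by
  unfold cls
  rw [if_neg hab, if_pos (sub_refl b)]

lemma cls_eq_some_false {a b s : Letter N} (h : cls a b s = some false) : Sub a s := by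
  unfold cls at h
  split at h
  · assumption
  · split at h <;> simp at h

lemma cls_eq_some_true {a b s : Letter N} (h : cls a b s = some true) : ¬ Sub a s ∧ Sub b s := by
  unfold cls at h
  split at h
  · simp at h
  · split at h
    · exact ⟨by assumption, by assumption⟩
    · simp at h

lemma cls_ne_none {a b s : Letter N} (h : cls a b s ≠ none) : Sub a s ∨ Sub b s := by
  unfold cls at h
  split at h
  · exact Or.inl (by assumption)
  · split at h
    · exact Or.inr (by assumption)
    · exact absurd rfl h

def hasT (a b : Letter N) (w : Word N) : Prop := ∃ c ∈ w, Sub a c ∧ Sub b c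

open Classical in
noncomputable def inv (a b : Letter N) (w : Word N) : Option (List Bool) :=
  if hasT a b w then none else some (collapse (w.filterMap (cls a b)))

lemma inv_pos {a b : Letter N} {w : Word N} (h : hasT a b w) : inv a b w = none := by
  unfold inv; rw [if_pos h]

lemma inv_neg {a b : Letter N} {w : Word N} (h : ¬ hasT a b w) :
    inv a b w = some (collapse (w.filterMap (cls a b))) := by
  unfold inv; rw [if_neg h]

lemma step_inv {a b : Letter N} (hab : ¬ Comm a b) {u v : Word N}
    (h : SwapStep u v ∨ CancelStep u v) : inv a b u = inv a b v := by
  rcases h with ⟨x, y, s, t, hc, h1, h2⟩ | ⟨x, y, s, t, hsub, h1, h2⟩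
  · -- swap step
    subst h1; subst h2
    have hTiff : hasT a b (x ++ s :: t :: y) ↔ hasT a b (x ++ t :: s :: y) := by
      constructor <;> rintro ⟨c, hc', hd⟩ <;> refine ⟨c, ?_, hd⟩ <;>
        simp only [List.mem_append, List.mem_cons] at hc' ⊢ <;> tauto
    by_cases hT : hasT a b (x ++ s :: t :: y)
    · rw [inv_pos hT, inv_pos (hTiff.mp hT)]
    · rw [inv_neg hT, inv_neg (fun h' => hT (hTiff.mpr h'))]
      have hnone : cls a b s = none ∨ cls a b t = none := by
        by_contra hcon
        push_neg at hcon
        rcases cls_ne_none hcon.1 with hs | hs <;> rcases cls_ne_none hcon.2 with ht | ht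
        · exact not_comm_self a (comm_of_subs hs ht hc)
        · exact hab (comm_of_subs hs ht hc)
        · exact hab (comm_of_subs ht hs (comm_symm hc))
        · exact not_comm_self b (comm_of_subs hs ht hc)
      rcases hnone with hn | hn <;>
        simp [List.filterMap_append, List.filterMap_cons, hn]
  · -- cancel step
    subst h2
    have hsubT : ∀ c, Sub a c ∧ Sub b c → c = t → Sub a s ∧ Sub b s := by
      rintro c ⟨h1', h2'⟩ rfl
      exact ⟨sub_trans h1' hsub, sub_trans h2' hsub⟩
    rcases h1 with h1 | h1 <;> subst h1
    · -- u = x ++ s :: t :: y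
      have hTiff : hasT a b (x ++ s :: t :: y) ↔ hasT a b (x ++ s :: y) := by
        constructor <;> rintro ⟨c, hc', hd⟩
        · simp only [List.mem_append, List.mem_cons] at hc'
          rcases hc' with h' | h' | h' | h'
          · exact ⟨c, by simp [h'], hd⟩
          · exact ⟨c, by simp [h'], hd⟩
          · exact ⟨s, by simp, hsubT c hd h'⟩
          · exact ⟨c, by simp [h'], hd⟩
        · refine ⟨c, ?_, hd⟩
          simp only [List.mem_append, List.mem_cons] at hc' ⊢
          tauto
      by_cases hT : hasT a b (x ++ s :: t :: y)
      · rw [inv_pos hT, inv_pos (hTiff.mp hT)]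
      · have hT' : ¬ hasT a b (x ++ s :: y) := fun h' => hT (hTiff.mpr h')
        rw [inv_neg hT, inv_neg hT']
        congr 1
        rcases hclst : cls a b t with _ | ⟨_ | _⟩
        · simp [List.filterMap_append, List.filterMap_cons, hclst]
        · -- cls t = some false, so Sub a t, Sub a s
          have has : Sub a s := sub_trans (cls_eq_some_false hclst) hsub
          have hclss : cls a b s = some false := by unfold cls; rw [if_pos has]
          simp only [List.filterMap_append, List.filterMap_cons, hclst, hclss]
          exact collapse_dup false (x.filterMap (cls a b)) (y.filterMap (cls a b))
        · -- cls t = some true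
          obtain ⟨hnat, hbt⟩ := cls_eq_some_true hclst
          have hbs : Sub b s := sub_trans hbt hsub
          have hnas : ¬ Sub a s := fun has => hT' ⟨s, by simp, has, hbs⟩
          have hclss : cls a b s = some true := by unfold cls; rw [if_neg hnas, if_pos hbs]
          simp only [List.filterMap_append, List.filterMap_cons, hclst, hclss]
          exact collapse_dup true (x.filterMap (cls a b)) (y.filterMap (cls a b))
    · -- u = x ++ t :: s :: y
      have hTiff : hasT a b (x ++ t :: s :: y) ↔ hasT a b (x ++ s :: y) := by
        constructor <;> rintro ⟨c, hc', hd⟩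
        · simp only [List.mem_append, List.mem_cons] at hc'
          rcases hc' with h' | h' | h' | h'
          · exact ⟨c, by simp [h'], hd⟩
          · exact ⟨s, by simp, hsubT c hd h'⟩
          · exact ⟨c, by simp [h'], hd⟩
          · exact ⟨c, by simp [h'], hd⟩
        · refine ⟨c, ?_, hd⟩
          simp only [List.mem_append, List.mem_cons] at hc' ⊢
          tauto
      by_cases hT : hasT a b (x ++ t :: s :: y)
      · rw [inv_pos hT, inv_pos (hTiff.mp hT)]
      · have hT' : ¬ hasT a b (x ++ s :: y) := fun h' => hT (hTiff.mpr h')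
        rw [inv_neg hT, inv_neg hT']
        congr 1
        rcases hclst : cls a b t with _ | ⟨_ | _⟩
        · simp [List.filterMap_append, List.filterMap_cons, hclst]
        · have has : Sub a s := sub_trans (cls_eq_some_false hclst) hsub
          have hclss : cls a b s = some false := by unfold cls; rw [if_pos has]
          simp only [List.filterMap_append, List.filterMap_cons, hclst, hclss]
          exact collapse_dup false (x.filterMap (cls a b)) (y.filterMap (cls a b))
        · obtain ⟨hnat, hbt⟩ := cls_eq_some_true hclst
          have hbs : Sub b s := sub_trans hbt hsub
          have hnas : ¬ Sub a s := fun has => hT' ⟨s, by simp, has, hbs⟩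
          have hclss : cls a b s = some true := by unfold cls; rw [if_neg hnas, if_pos hbs]
          simp only [List.filterMap_append, List.filterMap_cons, hclst, hclss]
          exact collapse_dup true (x.filterMap (cls a b)) (y.filterMap (cls a b))

lemma gamma_inv {a b : Letter N} (hab : ¬ Comm a b) {u v : Word N} (h : GammaRel u v) :
    inv a b u = inv a b v := by
  induction h with
  | rel _ _ h => exact step_inv hab h
  | refl _ => rfl
  | symm _ _ _ ih => exact ih.symm
  | trans _ _ _ _ _ ih1 ih2 => exact ih1.trans ih2

/-! ### Existence of an incomparable non-commuting pair -/

lemma exists_incomp : ∀ (g : ℕ) (u : Word N), Reduced u →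
    ∀ (A B C : Word N) (x y : Letter N), u = A ++ x :: (B ++ y :: C) → B.length ≤ g →
    ¬ Comm x y →
    ∃ a b, a ∈ u ∧ b ∈ u ∧ ¬ Comm a b ∧ ¬ Sub a b ∧ ¬ Sub b a := by
  intro g
  induction g with
  | zero =>
    intro u hu A B C x y hdec hlen hcomm
    by_cases hxy : Sub x y
    · obtain ⟨r, hr, _⟩ := reduced_no₁ hu hdec hxy
      rw [List.length_eq_zero_iff.mp (Nat.le_zero.mp hlen)] at hr
      simp at hr
    · by_cases hyx : Sub y x
      · obtain ⟨r, hr, _⟩ := reduced_no₂ hu hdec hyx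
        rw [List.length_eq_zero_iff.mp (Nat.le_zero.mp hlen)] at hr
        simp at hr
      · exact ⟨x, y, by rw [hdec]; simp, by rw [hdec]; simp, hcomm, hxy, hyx⟩
  | succ g ih =>
    intro u hu A B C x y hdec hlen hcomm
    by_cases hxy : Sub x y
    · obtain ⟨r, hr, hxr⟩ := reduced_no₁ hu hdec hxy
      obtain ⟨B₁, B₂, rfl⟩ := List.append_of_mem hr
      have hdec' : u = A ++ x :: (B₁ ++ r :: (B₂ ++ y :: C)) := by
        rw [hdec]; simp
      have hlen' : B₁.length ≤ g := by
        have := congrArg List.length (rfl : B₁ ++ r :: B₂ = B₁ ++ r :: B₂)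
        simp only [List.length_append, List.length_cons] at hlen ⊢
        omega
      exact ih u hu A B₁ (B₂ ++ y :: C) x r hdec' (by
        simp only [List.length_append, List.length_cons] at hlen; omega) hxr
    · by_cases hyx : Sub y x
      · obtain ⟨r, hr, hyr⟩ := reduced_no₂ hu hdec hyx
        obtain ⟨B₁, B₂, rfl⟩ := List.append_of_mem hr
        have hdec' : u = (A ++ x :: B₁) ++ r :: (B₂ ++ y :: C) := by
          rw [hdec]; simp
        refine ih u hu (A ++ x :: B₁) B₂ C r y hdec' (by
          simp only [List.length_append, List.length_cons] at hlen; omega)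
          (fun hc => hyr (comm_symm hc))
      · exact ⟨x, y, by rw [hdec]; simp, by rw [hdec]; simp, hcomm, hxy, hyx⟩

/-! ### The descent lemma: a dominated pair yields a pair of strictly larger hull -/

lemma descent : ∀ (g : ℕ) (u : Word N), Reduced u → ∀ (hlo hhi : ℕ),
    ∀ (A B C : Word N) (x z : Letter N),
    (u = A ++ x :: (B ++ z :: C) ∨ u = A ++ z :: (B ++ x :: C)) → B.length ≤ g →
    Sub x z → z.lo ≤ hlo → hhi ≤ z.hi →
    ∃ d e, d ∈ u ∧ e ∈ u ∧ ¬ Comm d e ∧ ¬ Sub d e ∧ ¬ Sub e d ∧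
      min d.lo e.lo ≤ hlo ∧ hhi ≤ max d.hi e.hi ∧
      (min d.lo e.lo < hlo ∨ hhi < max d.hi e.hi) := by
  intro g
  induction g with
  | zero =>
    intro u hu hlo hhi A B C x z hdec hlen hsub hzlo hzhi
    exfalso
    rcases hdec with hdec | hdec
    · obtain ⟨r, hr, _⟩ := reduced_no₁ hu hdec hsub
      rw [List.length_eq_zero_iff.mp (Nat.le_zero.mp hlen)] at hr
      simp at hr
    · obtain ⟨r, hr, _⟩ := reduced_no₂ hu hdec hsub
      rw [List.length_eq_zero_iff.mp (Nat.le_zero.mp hlen)] at hr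
      simp at hr
  | succ g ih =>
    intro u hu hlo hhi A B C x z hdec hlen hsub hzlo hzhi
    have hget : ∃ r ∈ B, ¬ Comm x r := by
      rcases hdec with hdec | hdec
      · exact reduced_no₁ hu hdec hsub
      · exact reduced_no₂ hu hdec hsub
    obtain ⟨r, hr, hxr⟩ := hget
    have hzr : ¬ Comm z r := notcomm_mono hsub hxr
    obtain ⟨B₁, B₂, rfl⟩ := List.append_of_mem hr
    have hB : B₁.length ≤ g ∧ B₂.length ≤ g := by
      simp only [List.length_append, List.length_cons] at hlen
      omega
    by_cases hrz : Sub r z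
    · -- recurse with x := r
      rcases hdec with hdec | hdec
      · have hdec' : u = (A ++ x :: B₁) ++ r :: (B₂ ++ z :: C) := by rw [hdec]; simp
        exact ih u hu hlo hhi (A ++ x :: B₁) B₂ C r z (Or.inl hdec') hB.2 hrz hzlo hzhi
      · have hdec' : u = A ++ z :: (B₁ ++ r :: (B₂ ++ x :: C)) := by rw [hdec]; simp
        exact ih u hu hlo hhi A B₁ (B₂ ++ x :: C) r z (Or.inr hdec') hB.1 hrz hzlo hzhi
    · by_cases hzr' : Sub z r
      · -- recurse with x := z, z := r
        have hrlo : r.lo ≤ hlo := le_trans hzr'.1 hzlo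
        have hrhi : hhi ≤ r.hi := le_trans hzhi hzr'.2
        rcases hdec with hdec | hdec
        · have hdec' : u = (A ++ x :: B₁) ++ r :: (B₂ ++ z :: C) := by rw [hdec]; simp
          exact ih u hu hlo hhi (A ++ x :: B₁) B₂ C z r (Or.inr hdec') hB.2 hzr' hrlo hrhi
        · have hdec' : u = A ++ z :: (B₁ ++ r :: (B₂ ++ x :: C)) := by rw [hdec]; simp
          exact ih u hu hlo hhi A B₁ (B₂ ++ x :: C) z r (Or.inl hdec') hB.1 hzr' hrlo hrhi
      · -- r and z are incomparable: the pair (r, z) has strictly larger hull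
        have hru : r ∈ u := by
          rcases hdec with hdec | hdec <;> rw [hdec] <;> simp
        have hzu : z ∈ u := by
          rcases hdec with hdec | hdec <;> rw [hdec] <;> simp
        refine ⟨r, z, hru, hzu, fun hc => hzr (comm_symm hc), hrz, hzr', ?_, ?_, ?_⟩
        · exact le_trans (min_le_right _ _) hzlo
        · exact le_trans hzhi (le_max_right _ _)
        · by_contra hcon
          push_neg at hcon
          obtain ⟨h1, h2⟩ := hcon
          have hrlo : hlo ≤ r.lo := by
            have := min_le_left r.lo z.lo
            omega
          have hrhi : r.hi ≤ hhi := by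
            have := le_max_left r.hi z.hi
            omega
          exact hrz ⟨le_trans hzlo hrlo, le_trans hrhi hzhi⟩

/-! ### Existence of an undominated incomparable non-commuting pair -/

lemma exists_undominated : ∀ (K : ℕ) (u : Word N), Reduced u → ∀ (a b : Letter N),
    a ∈ u → b ∈ u → ¬ Comm a b → ¬ Sub a b → ¬ Sub b a →
    N ≤ (max a.hi b.hi - min a.lo b.lo) + K →
    ∃ a' b', a' ∈ u ∧ b' ∈ u ∧ ¬ Comm a' b' ∧ ¬ Sub a' b' ∧ ¬ Sub b' a' ∧
      ∀ c ∈ u, ¬ (Sub a' c ∧ Sub b' c) := by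
  intro K
  induction K with
  | zero =>
    intro u hu a b ha hb hcomm hab hba hK
    by_cases hdom : ∃ c ∈ u, Sub a c ∧ Sub b c
    · exfalso
      obtain ⟨c, hcu, hac, hbc⟩ := hdom
      have hca : a ≠ c := fun h => hba (h ▸ hbc)
      obtain ⟨A, B, C, hdec⟩ := two_mem_split ha hcu hca
      obtain ⟨d, e, hdu, heu, _, hnde, _, h1, h2, h3⟩ :=
        descent B.length u hu (min a.lo b.lo) (max a.hi b.hi) A B C a c hdec le_rfl hac
          (le_min hac.1 hbc.1) (max_le hac.2 hbc.2)
      have hdN := d.hi_le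
      have heN := e.hi_le
      have halo := a.lo_le_hi
      have haN := a.hi_le
      have hblo := b.lo_le_hi
      have hbN := b.hi_le
      have hdlo := d.lo_le_hi
      have helo := e.lo_le_hi
      simp only [Nat.add_zero] at hK
      omega
    · push_neg at hdom
      exact ⟨a, b, ha, hb, hcomm, hab, hba, fun c hc hcon => hdom c hc hcon.1 hcon.2⟩
  | succ K ih =>
    intro u hu a b ha hb hcomm hab hba hK
    by_cases hdom : ∃ c ∈ u, Sub a c ∧ Sub b c
    · obtain ⟨c, hcu, hac, hbc⟩ := hdom
      have hca : a ≠ c := fun h => hba (h ▸ hbc)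
      obtain ⟨A, B, C, hdec⟩ := two_mem_split ha hcu hca
      obtain ⟨d, e, hdu, heu, hnc, hnde, hned, h1, h2, h3⟩ :=
        descent B.length u hu (min a.lo b.lo) (max a.hi b.hi) A B C a c hdec le_rfl hac
          (le_min hac.1 hbc.1) (max_le hac.2 hbc.2)
      refine ih u hu d e hdu heu hnc hnde hned ?_
      have halo := a.lo_le_hi
      have hblo := b.lo_le_hi
      have hdlo := d.lo_le_hi
      have helo := e.lo_le_hi
      omega
    · push_neg at hdom
      exact ⟨a, b, ha, hb, hcomm, hab, hba, fun c hc hcon => hdom c hc hcon.1 hcon.2⟩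

/-! ### Part 2, backward direction -/

lemma gamma_pairwise {u : Word N} (hu : Reduced u) (hg : GammaRel (u ++ u) u) :
    List.Pairwise (Comm (N := N)) u := by
  by_contra hnp
  obtain ⟨A, B, C, x, y, hdec, hncomm⟩ := not_pairwise_split hnp
  obtain ⟨a₀, b₀, ha₀, hb₀, hc₀, hab₀, hba₀⟩ :=
    exists_incomp B.length u hu A B C x y hdec le_rfl hncomm
  obtain ⟨a, b, ha, hb, hcomm, hab, hba, hundom⟩ :=
    exists_undominated N u hu a₀ b₀ ha₀ hb₀ hc₀ hab₀ hba₀ (by omega)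
  have hI := gamma_inv hcomm hg
  have hTu : ¬ hasT a b u := fun ⟨c, hc, hd⟩ => hundom c hc hd
  have hTuu : ¬ hasT a b (u ++ u) := by
    rintro ⟨c, hc, hd⟩
    exact hTu ⟨c, by rcases List.mem_append.mp hc with h | h <;> exact h, hd⟩
  rw [inv_neg hTu, inv_neg hTuu] at hI
  have hcol : collapse ((u ++ u).filterMap (cls a b)) = collapse (u.filterMap (cls a b)) :=
    Option.some.inj hI
  set p := u.filterMap (cls a b) with hp
  have hfm : (u ++ u).filterMap (cls a b) = p ++ p := by
    rw [List.filterMap_append]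
  rw [hfm] at hcol
  have hfalse : (false : Bool) ∈ p := by
    rw [hp]
    exact List.mem_filterMap.mpr ⟨a, ha, cls_a hba⟩
  have htrue : (true : Bool) ∈ p := by
    rw [hp]
    exact List.mem_filterMap.mpr ⟨b, hb, cls_b hab⟩
  have h2 : 2 ≤ (collapse p).length :=
    length_ge_two (mem_collapse hfalse) (mem_collapse htrue) (by simp)
  have hlen : (collapse p).length + (collapse p).length ≤ (collapse (p ++ p)).length + 1 := by
    rw [collapse_append]
    exact foldr_cstep_length p (collapse p)
  rw [hcol] at hlen
  omega

end CSAux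


open PS in
/-- A reduced word is commuting iff it left-absorbs itself, iff it is idempotent
in the monoid Γ. -/
theorem commuting_iff_self_absorbing {N : ℕ} (u : Word N) (hu : Reduced u) :
    (List.Pairwise (Comm (N := N)) u ↔ LAbsWord u u) ∧
    (List.Pairwise (Comm (N := N)) u ↔ GammaRel (u ++ u) u) := by
  constructor
  · exact ⟨CSAux.pairwise_labs, CSAux.labs_pairwise u hu⟩
  · exact ⟨fun h => CSAux.red_gammarel (CSAux.comm_red_sq u h),
      fun h => CSAux.gamma_pairwise hu h⟩
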